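/- For every finite simple graph G on n vertices there exists a convex drawing σ* of G such that cr(σ*) ≥ cr(σ) for every convex drawing σ of G, and such that for every equivalence class X of the twin relation (where u and v are twins if they have the same neighborhood, N(u) = N(v)), the image σ*(X) is a set of consecutive positions (a cyclic interval) in ZMod n. -/

import Mathlib

/-- Two edges (as unordered pairs of vertices) share no endpoint, i.e. they are independent. -/
def Sym2Indep {V : Type*} (e f : Sym2 V) : Prop := ∀ x : V, x ∈ e → x ∉ f

/-- `M(G)`: the number of unordered pairs of edges of `G` that share no endpoint. -/
noncomputable def indepPairs {V : Type*} (G : SimpleGraph V) : ℕ :=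
  {p : Sym2 (Sym2 V) | ∃ e f : Sym2 V,
    p = s(e, f) ∧ e ∈ G.edgeSet ∧ f ∈ G.edgeSet ∧ Sym2Indep e f}.ncard

/-- `z` lies on the open cyclic arc from `x` to `y` in `ZMod n`. -/
def InArc {n : ℕ} (x y z : ZMod n) : Prop :=
  0 < (z - x).val ∧ (z - x).val < (y - x).val

/-- The independent edges `e` and `f` cross in the convex drawing `σ`:
their endpoints alternate in the cyclic order. -/
def ConvexCross {V : Type*} {n : ℕ} (σ : V → ZMod n) (e f : Sym2 V) : Prop :=
  Sym2Indep e f ∧ ∃ a b c d : V, e = s(a, b) ∧ f = s(c, d) ∧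
    Xor' (InArc (σ a) (σ b) (σ c)) (InArc (σ a) (σ b) (σ d))

/-- `cr(σ)`: the number of unordered pairs of edges of `G` that cross in the
convex drawing `σ`. -/
noncomputable def convexCr {V : Type*} {n : ℕ} (G : SimpleGraph V) (σ : V → ZMod n) : ℕ :=
  {p : Sym2 (Sym2 V) | ∃ e f : Sym2 V,
    p = s(e, f) ∧ e ∈ G.edgeSet ∧ f ∈ G.edgeSet ∧ ConvexCross σ e f}.ncard

/-- A set of positions in `ZMod n` is a cyclic interval, i.e. a set of consecutive
positions `{a, a+1, …, a+k}`. -/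
def IsCyclicInterval {n : ℕ} (S : Set (ZMod n)) : Prop :=
  ∃ (a : ZMod n) (k : ℕ), S = {z : ZMod n | ∃ j : ℕ, j ≤ k ∧ z = a + (j : ZMod n)}


set_option maxHeartbeats 1000000
set_option linter.unusedSectionVars false
set_option linter.unusedVariables false

lemma val_sub_if {n : ℕ} [NeZero n] (a b : ZMod n) :
    (a - b).val = if b.val ≤ a.val then a.val - b.val else a.val + n - b.val := by
  rcases eq_or_ne b 0 with rfl | hb
  · simp [ZMod.val_zero, Nat.sub_zero]
  · haveI : NeZero b := ⟨hb⟩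
    rw [sub_eq_add_neg, ZMod.val_add, ZMod.val_neg_of_ne_zero]
    have h1 : a.val < n := a.val_lt
    have h2 : b.val < n := b.val_lt
    have h3 : 0 < b.val := by
      rcases Nat.eq_zero_or_pos b.val with h | h
      · exact absurd ((ZMod.val_eq_zero b).mp h) hb
      · exact h
    split_ifs with h
    · have : a.val + (n - b.val) = n + (a.val - b.val) := by omega
      rw [this, Nat.add_mod_left, Nat.mod_eq_of_lt (by omega)]
    · rw [Nat.mod_eq_of_lt (by omega)]; omega

lemma inArc_iff {n : ℕ} [NeZero n] {x y z : ZMod n} (hxy : x ≠ y) (hxz : x ≠ z) (hyz : y ≠ z) :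
    InArc x y z ↔ (x.val < z.val ∧ z.val < y.val) ∨ (y.val < x.val ∧ x.val < z.val) ∨
      (z.val < y.val ∧ y.val < x.val) := by
  have e1 := val_sub_if z x
  have e2 := val_sub_if y x
  have h1 : x.val < n := x.val_lt
  have h2 : y.val < n := y.val_lt
  have h3 : z.val < n := z.val_lt
  have d1 : x.val ≠ y.val := fun h => hxy (ZMod.val_injective n h)
  have d2 : x.val ≠ z.val := fun h => hxz (ZMod.val_injective n h)
  have d3 : y.val ≠ z.val := fun h => hyz (ZMod.val_injective n h)
  unfold InArc
  rw [e1, e2]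
  split_ifs <;> omega

set_option maxHeartbeats 1000000
set_option linter.unusedSectionVars false
set_option linter.unusedVariables false
/-- canonical crossing predicate on four vertices -/
def CrossPts {n : ℕ} (pa pb pc pd : ZMod n) : Prop :=
  Xor' (InArc pa pb pc) (InArc pa pb pd)

section pts
variable {n : ℕ} [NeZero n] {a b c d : ZMod n}

lemma val_ne_iff {x y : ZMod n} : x.val ≠ y.val ↔ x ≠ y := by
  constructor
  · rintro h rfl; exact h rfl
  · intro h he; exact h (ZMod.val_injective n he)

lemma crossPts_comm_left (hab : a ≠ b) (hac : a ≠ c) (had : a ≠ d) (hbc : b ≠ c)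
    (hbd : b ≠ d) (hcd : c ≠ d) : CrossPts a b c d ↔ CrossPts b a c d := by
  unfold CrossPts Xor' Xor
  rw [inArc_iff hab hac hbc, inArc_iff hab had hbd,
    inArc_iff hab.symm hbc hac, inArc_iff hab.symm hbd had]
  have d1 := val_ne_iff.mpr hab
  have d2 := val_ne_iff.mpr hac
  have d3 := val_ne_iff.mpr had
  have d4 := val_ne_iff.mpr hbc
  have d5 := val_ne_iff.mpr hbd
  have d6 := val_ne_iff.mpr hcd
  omega

lemma crossPts_comm_right : CrossPts a b c d ↔ CrossPts a b d c := by unfold CrossPts Xor'; rw [xor_comm]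

lemma crossPts_swap (hab : a ≠ b) (hac : a ≠ c) (had : a ≠ d) (hbc : b ≠ c)
    (hbd : b ≠ d) (hcd : c ≠ d) : CrossPts a b c d ↔ CrossPts c d a b := by
  unfold CrossPts Xor' Xor
  rw [inArc_iff hab hac hbc, inArc_iff hab had hbd,
    inArc_iff hcd hac.symm had.symm, inArc_iff hcd hbc.symm hbd.symm]
  have d1 := val_ne_iff.mpr hab
  have d2 := val_ne_iff.mpr hac
  have d3 := val_ne_iff.mpr had
  have d4 := val_ne_iff.mpr hbc
  have d5 := val_ne_iff.mpr hbd
  have d6 := val_ne_iff.mpr hcd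
  omega

/-- order-isomorphism invariance of InArc -/
lemma inArc_congr {x y z x' y' z' : ZMod n}
    (hxy : x ≠ y) (hxz : x ≠ z) (hyz : y ≠ z)
    (hxy' : x' ≠ y') (hxz' : x' ≠ z') (hyz' : y' ≠ z')
    (o1 : x.val < y.val ↔ x'.val < y'.val) (o2 : x.val < z.val ↔ x'.val < z'.val)
    (o3 : y.val < z.val ↔ y'.val < z'.val) :
    InArc x y z ↔ InArc x' y' z' := by
  rw [inArc_iff hxy hxz hyz, inArc_iff hxy' hxz' hyz']
  have d1 := val_ne_iff.mpr hxy
  have d2 := val_ne_iff.mpr hxz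
  have d3 := val_ne_iff.mpr hyz
  have e1 := val_ne_iff.mpr hxy'
  have e2 := val_ne_iff.mpr hxz'
  have e3 := val_ne_iff.mpr hyz'
  omega

/-- order-isomorphism invariance of crossing -/
lemma crossPts_congr {a' b' c' d' : ZMod n}
    (hab : a ≠ b) (hac : a ≠ c) (had : a ≠ d) (hbc : b ≠ c) (hbd : b ≠ d) (hcd : c ≠ d)
    (hab' : a' ≠ b') (hac' : a' ≠ c') (had' : a' ≠ d') (hbc' : b' ≠ c') (hbd' : b' ≠ d')
    (hcd' : c' ≠ d')
    (o1 : a.val < b.val ↔ a'.val < b'.val) (o2 : a.val < c.val ↔ a'.val < c'.val)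
    (o3 : a.val < d.val ↔ a'.val < d'.val) (o4 : b.val < c.val ↔ b'.val < c'.val)
    (o5 : b.val < d.val ↔ b'.val < d'.val) (o6 : c.val < d.val ↔ c'.val < d'.val) :
    CrossPts a b c d ↔ CrossPts a' b' c' d' := by
  unfold CrossPts
  rw [inArc_congr hab hac hbc hab' hac' hbc' o1 o2 o4,
    inArc_congr hab had hbd hab' had' hbd' o1 o3 o5]

/-- at most one of the two pairings crosses -/
lemma crossPts_not_both (hab : a ≠ b) (hac : a ≠ c) (had : a ≠ d) (hbc : b ≠ c)
    (hbd : b ≠ d) (hcd : c ≠ d) : ¬ (CrossPts a b c d ∧ CrossPts a d c b) := by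
  unfold CrossPts Xor' Xor
  rw [inArc_iff hab hac hbc, inArc_iff hab had hbd,
    inArc_iff had hac hcd.symm, inArc_iff had hab hbd.symm]
  have d1 := val_ne_iff.mpr hab
  have d2 := val_ne_iff.mpr hac
  have d3 := val_ne_iff.mpr had
  have d4 := val_ne_iff.mpr hbc
  have d5 := val_ne_iff.mpr hbd
  have d6 := val_ne_iff.mpr hcd
  omega

/-- when `a,c` sit below `m` and `b,d` sit at or above `m`, at least one pairing crosses -/
lemma crossPts_at_least_one {m : ℕ} (hab : a ≠ b) (hac : a ≠ c) (had : a ≠ d) (hbc : b ≠ c)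
    (hbd : b ≠ d) (hcd : c ≠ d) (ha : a.val < m) (hc : c.val < m) (hb : m ≤ b.val)
    (hd : m ≤ d.val) : CrossPts a b c d ∨ CrossPts a d c b := by
  unfold CrossPts Xor' Xor
  rw [inArc_iff hab hac hbc, inArc_iff hab had hbd,
    inArc_iff had hac hcd.symm, inArc_iff had hab hbd.symm]
  have d1 := val_ne_iff.mpr hab
  have d2 := val_ne_iff.mpr hac
  have d3 := val_ne_iff.mpr had
  have d4 := val_ne_iff.mpr hbc
  have d5 := val_ne_iff.mpr hbd
  have d6 := val_ne_iff.mpr hcd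
  omega
end pts


section graph
variable {V : Type*} [Fintype V] {n : ℕ} [NeZero n]

open Classical in
/-- the crossing pairs as a Finset -/
noncomputable def crF (G : SimpleGraph V) (σ : V → ZMod n) : Finset (Sym2 (Sym2 V)) :=
  Finset.univ.filter (fun p => ∃ e f : Sym2 V,
    p = s(e, f) ∧ e ∈ G.edgeSet ∧ f ∈ G.edgeSet ∧ ConvexCross σ e f)

lemma convexCr_eq (G : SimpleGraph V) (σ : V → ZMod n) : convexCr G σ = (crF G σ).card := by
  classical
  unfold convexCr crF
  rw [Set.ncard_eq_toFinset_card']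
  congr 1
  ext p
  simp [Set.mem_toFinset]

variable {G : SimpleGraph V} {σ : V → ZMod n}

lemma sym2Indep_four {a b c d : V} (hac : a ≠ c) (had : a ≠ d) (hbc : b ≠ c) (hbd : b ≠ d) :
    Sym2Indep s(a, b) s(c, d) := by
  intro x hx hx'
  rw [Sym2.mem_iff] at hx hx'
  rcases hx with rfl | rfl <;> rcases hx' with rfl | rfl <;> simp_all

lemma convexCross_char (hσ : Function.Injective σ) {a b c d : V}
    (hab : a ≠ b) (hac : a ≠ c) (had : a ≠ d) (hbc : b ≠ c) (hbd : b ≠ d) (hcd : c ≠ d) :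
    ConvexCross σ s(a, b) s(c, d) ↔ CrossPts (σ a) (σ b) (σ c) (σ d) := by
  have pab := hσ.ne hab
  have pac := hσ.ne hac
  have pad := hσ.ne had
  have pbc := hσ.ne hbc
  have pbd := hσ.ne hbd
  have pcd := hσ.ne hcd
  constructor
  · rintro ⟨hind, a', b', c', d', he, hf, hx⟩
    rw [Sym2.eq_iff] at he hf
    rcases he with ⟨rfl, rfl⟩ | ⟨rfl, rfl⟩ <;> rcases hf with ⟨rfl, rfl⟩ | ⟨rfl, rfl⟩
    · exact hx
    · exact crossPts_comm_right.mpr hx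
    · exact (crossPts_comm_left pab pac pad pbc pbd pcd).mpr hx
    · exact (crossPts_comm_left pab pac pad pbc pbd pcd).mpr (crossPts_comm_right.mpr hx)
  · intro hx
    exact ⟨sym2Indep_four hac had hbc hbd, a, b, c, d, rfl, rfl, hx⟩

/-- decomposition of a member of the crossing finset -/
lemma crF_mem_iff (hσ : Function.Injective σ) {p : Sym2 (Sym2 V)} :
    p ∈ crF G σ ↔ ∃ a b c d : V, p = s(s(a, b), s(c, d)) ∧ G.Adj a b ∧ G.Adj c d ∧
      a ≠ c ∧ a ≠ d ∧ b ≠ c ∧ b ≠ d ∧ CrossPts (σ a) (σ b) (σ c) (σ d) := by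
  classical
  unfold crF
  simp only [Finset.mem_filter, Finset.mem_univ, true_and]
  constructor
  · rintro ⟨e, f, rfl, he, hf, hcross⟩
    induction e using Sym2.inductionOn with | hf a b =>
    induction f using Sym2.inductionOn with | hf c d =>
    rw [SimpleGraph.mem_edgeSet] at he hf
    have hind := hcross.1
    have hac : a ≠ c := fun h => hind a (by simp) (by simp [h])
    have had : a ≠ d := fun h => hind a (by simp) (by simp [h])
    have hbc : b ≠ c := fun h => hind b (by simp) (by simp [h])
    have hbd : b ≠ d := fun h => hind b (by simp) (by simp [h])
    refine ⟨a, b, c, d, rfl, he, hf, hac, had, hbc, hbd, ?_⟩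
    exact (convexCross_char hσ he.ne hac had hbc hbd hf.ne).mp hcross
  · rintro ⟨a, b, c, d, rfl, he, hf, hac, had, hbc, hbd, hx⟩
    exact ⟨s(a, b), s(c, d), rfl, he, hf,
      (convexCross_char hσ he.ne hac had hbc hbd hf.ne).mpr hx⟩

end graph


section key
variable {V : Type*} [Fintype V] {n : ℕ} [NeZero n]

/-- edge meets the class -/
def Mts (Cf : Finset V) (e : Sym2 V) : Prop := ∃ y ∈ Cf, y ∈ e

open Classical in
noncomputable def soPairs (G : SimpleGraph V) (Cf : Finset V) (σ : V → ZMod n) (w : V) :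
    Finset (V × Sym2 V) :=
  Finset.univ.filter (fun t => G.Adj w t.1 ∧ t.2 ∈ G.edgeFinset ∧ (∀ z ∈ t.2, z ∉ Cf) ∧
    t.1 ∉ t.2 ∧ ConvexCross σ s(w, t.1) t.2)

open Classical in
noncomputable def QdF (G : SimpleGraph V) (Cf : Finset V) (σ : V → ZMod n) :
    Finset ((V × V) × (V × V)) :=
  Finset.univ.filter (fun q => q.1.1 ∈ Cf ∧ q.2.1 ∈ Cf ∧ G.Adj q.1.1 q.1.2 ∧
    G.Adj q.2.1 q.2.2 ∧ q.1.1 ≠ q.2.1 ∧ q.1.2 ≠ q.2.2 ∧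
    ConvexCross σ s(q.1.1, q.1.2) s(q.2.1, q.2.2))

open Classical in
noncomputable def A0F (G : SimpleGraph V) (Cf : Finset V) (σ : V → ZMod n) :
    Finset (Sym2 (Sym2 V)) := (crF G σ).filter (fun p => ∀ e ∈ p, ¬ Mts Cf e)

open Classical in
noncomputable def A1F (G : SimpleGraph V) (Cf : Finset V) (σ : V → ZMod n) :
    Finset (Sym2 (Sym2 V)) :=
  (crF G σ).filter (fun p => ¬ (∀ e ∈ p, ¬ Mts Cf e) ∧ ¬ (∀ e ∈ p, Mts Cf e))

open Classical in
noncomputable def A2F (G : SimpleGraph V) (Cf : Finset V) (σ : V → ZMod n) :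
    Finset (Sym2 (Sym2 V)) := (crF G σ).filter (fun p => ∀ e ∈ p, Mts Cf e)

variable {G : SimpleGraph V} {Cf : Finset V} {σ σ' : V → ZMod n}

lemma crF_card_partition (hσ : Function.Injective σ) :
    (crF G σ).card = (A0F G Cf σ).card + (A1F G Cf σ).card + (A2F G Cf σ).card := by
  classical
  unfold A0F A1F A2F
  rw [← Finset.card_filter_add_card_filter_not
    (s := crF G σ) (p := fun p => ∀ e ∈ p, ¬ Mts Cf e)]
  have h2 : (crF G σ).filter (fun p => ¬ ∀ e ∈ p, ¬ Mts Cf e) =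
      ((crF G σ).filter (fun p => ¬ (∀ e ∈ p, ¬ Mts Cf e) ∧ ¬ (∀ e ∈ p, Mts Cf e))) ∪
      ((crF G σ).filter (fun p => ∀ e ∈ p, Mts Cf e)) := by
    ext p
    simp only [Finset.mem_filter, Finset.mem_union]
    constructor
    · rintro ⟨hp, hq⟩
      by_cases hr : ∀ e ∈ p, Mts Cf e
      · exact Or.inr ⟨hp, hr⟩
      · exact Or.inl ⟨hp, hq, hr⟩
    · rintro (⟨hp, hq, _⟩ | ⟨hp, hr⟩)
      · exact ⟨hp, hq⟩
      · refine ⟨hp, fun hq => ?_⟩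
        rcases (crF_mem_iff hσ).mp hp with ⟨a, b, c, d, rfl, _⟩
        exact hq s(a,b) (by simp) (hr s(a,b) (by simp))
  have hdisj : Disjoint
      ((crF G σ).filter (fun p => ¬ (∀ e ∈ p, ¬ Mts Cf e) ∧ ¬ (∀ e ∈ p, Mts Cf e)))
      ((crF G σ).filter (fun p => ∀ e ∈ p, Mts Cf e)) := by
    rw [Finset.disjoint_left]
    intro p hp hq
    exact (Finset.mem_filter.mp hp).2.2 (Finset.mem_filter.mp hq).2
  rw [h2, Finset.card_union_of_disjoint hdisj]
  omega

lemma convexCross_symm (hσ : Function.Injective σ) {e f : Sym2 V}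
    (he : e ∈ G.edgeSet) (hf : f ∈ G.edgeSet) (h : ConvexCross σ e f) : ConvexCross σ f e := by
  induction e using Sym2.inductionOn with | hf a b =>
  induction f using Sym2.inductionOn with | hf c d =>
  rw [SimpleGraph.mem_edgeSet] at he hf
  have hind := h.1
  have hac : a ≠ c := fun hh => hind a (by simp) (by simp [hh])
  have had : a ≠ d := fun hh => hind a (by simp) (by simp [hh])
  have hbc : b ≠ c := fun hh => hind b (by simp) (by simp [hh])
  have hbd : b ≠ d := fun hh => hind b (by simp) (by simp [hh])
  rw [convexCross_char hσ he.ne hac had hbc hbd hf.ne] at h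
  rw [convexCross_char hσ hf.ne hac.symm hbc.symm had.symm hbd.symm he.ne]
  exact (crossPts_swap (hσ.ne he.ne) (hσ.ne hac) (hσ.ne had) (hσ.ne hbc) (hσ.ne hbd)
    (hσ.ne hf.ne)).mp h

lemma convexCross_translate (t : ZMod n) (e f : Sym2 V) :
    ConvexCross (fun w => σ w - t) e f ↔ ConvexCross σ e f := by
  have harc : ∀ x y z : ZMod n, InArc (x - t) (y - t) (z - t) ↔ InArc x y z := by
    intro x y z
    unfold InArc
    rw [show z - t - (x - t) = z - x by ring, show y - t - (x - t) = y - x by ring]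
  unfold ConvexCross
  simp only [harc]

lemma crF_translate (t : ZMod n) : crF G (fun w => σ w - t) = crF G σ := by
  classical
  unfold crF
  apply Finset.filter_congr
  intro p _
  simp only [convexCross_translate, eq_iff_iff]

lemma soPairs_translate (t : ZMod n) (w : V) :
    soPairs G Cf (fun x => σ x - t) w = soPairs G Cf σ w := by
  classical
  unfold soPairs
  apply Finset.filter_congr
  intro p _
  simp only [convexCross_translate]

section twin
variable {u : V} (htwin : ∀ w ∈ Cf, ∀ x, G.Adj w x ↔ G.Adj u x)

include htwin in
lemma class_not_adj {w x : V} (hw : w ∈ Cf) (hx : x ∈ Cf) : ¬ G.Adj w x := by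
  intro h
  have h1 : G.Adj u x := (htwin w hw x).mp h
  have h2 : G.Adj x u := h1.symm
  have h3 : G.Adj u u := (htwin x hx u).mp h2
  exact G.irrefl h3

include htwin in
lemma adj_not_mem {w x : V} (hw : w ∈ Cf) (h : G.Adj w x) : x ∉ Cf :=
  fun hx => class_not_adj htwin hw hx h

include htwin in
lemma orient_meeting {e : Sym2 V} (he : e ∈ G.edgeSet) (hm : Mts Cf e) :
    ∃ w x, w ∈ Cf ∧ x ∉ Cf ∧ G.Adj w x ∧ e = s(w, x) := by
  induction e using Sym2.inductionOn with | hf a b =>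
  rw [SimpleGraph.mem_edgeSet] at he
  obtain ⟨y, hy, hye⟩ := hm
  rw [Sym2.mem_iff] at hye
  rcases hye with rfl | rfl
  · exact ⟨y, b, hy, adj_not_mem htwin hy he, he, rfl⟩
  · exact ⟨y, a, hy, adj_not_mem htwin hy he.symm, he.symm, Sym2.eq_swap⟩

end twin

/-- order-isomorphism on the relevant points transfers the whole `A0` part -/
lemma A0F_eq (hσ : Function.Injective σ) (hσ' : Function.Injective σ')
    (hord : ∀ d₁ d₂ : V, d₁ ∉ Cf → d₂ ∉ Cf →
      ((σ d₁).val < (σ d₂).val ↔ (σ' d₁).val < (σ' d₂).val)) :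
    A0F G Cf σ = A0F G Cf σ' := by
  classical
  have main : ∀ (τ τ' : V → ZMod n), Function.Injective τ → Function.Injective τ' →
      (∀ d₁ d₂ : V, d₁ ∉ Cf → d₂ ∉ Cf → ((τ d₁).val < (τ d₂).val ↔ (τ' d₁).val < (τ' d₂).val)) →
      ∀ p, p ∈ A0F G Cf τ → p ∈ A0F G Cf τ' := by
    intro τ τ' hτ hτ' ho p hp
    rw [A0F, Finset.mem_filter] at hp ⊢
    obtain ⟨hcr, hP⟩ := hp
    rcases (crF_mem_iff hτ).mp hcr with ⟨a, b, c, d, rfl, hab, hcd, hac, had, hbc, hbd, hx⟩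
    have hA : ∀ z ∈ (s(a,b) : Sym2 V), z ∉ Cf := by
      intro z hz hzC
      exact hP s(a,b) (by simp) ⟨z, hzC, hz⟩
    have hB : ∀ z ∈ (s(c,d) : Sym2 V), z ∉ Cf := by
      intro z hz hzC
      exact hP s(c,d) (by simp [Sym2.mem_iff]) ⟨z, hzC, hz⟩
    have ha : a ∉ Cf := hA a (by simp)
    have hb : b ∉ Cf := hA b (by simp)
    have hc : c ∉ Cf := hB c (by simp)
    have hd : d ∉ Cf := hB d (by simp)
    refine ⟨(crF_mem_iff hτ').mpr ⟨a, b, c, d, rfl, hab, hcd, hac, had, hbc, hbd, ?_⟩, hP⟩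
    rw [← crossPts_congr (hτ.ne hab.ne) (hτ.ne hac) (hτ.ne had) (hτ.ne hbc) (hτ.ne hbd)
      (hτ.ne hcd.ne) (hτ'.ne hab.ne) (hτ'.ne hac) (hτ'.ne had) (hτ'.ne hbc) (hτ'.ne hbd)
      (hτ'.ne hcd.ne) (ho a b ha hb) (ho a c ha hc) (ho a d ha hd) (ho b c hb hc)
      (ho b d hb hd) (ho c d hc hd)]
    exact hx
  apply Finset.Subset.antisymm
  · exact fun p hp => main σ σ' hσ hσ' hord p hp
  · exact fun p hp => main σ' σ hσ' hσ (fun d₁ d₂ h1 h2 => (hord d₁ d₂ h1 h2).symm) p hp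

section twin2
variable {u : V} (htwin : ∀ w ∈ Cf, ∀ x, G.Adj w x ↔ G.Adj u x)

include htwin in
lemma A1F_card (hσ : Function.Injective σ) :
    (A1F G Cf σ).card = ∑ w ∈ Cf, (soPairs G Cf σ w).card := by
  classical
  rw [← Finset.card_sigma]
  symm
  apply Finset.card_bij (i := fun (q : (_ : V) × (V × Sym2 V)) _ => s(s(q.1, q.2.1), q.2.2))
  · rintro ⟨w, x, f⟩ hq
    rw [Finset.mem_sigma] at hq
    obtain ⟨hw, hq⟩ := hq
    rw [soPairs, Finset.mem_filter] at hq
    obtain ⟨-, hadj, hfe, havoid, hxf, hcc⟩ := hq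
    rw [A1F, Finset.mem_filter]
    refine ⟨?_, ?_, ?_⟩
    · rw [crF, Finset.mem_filter]
      exact ⟨Finset.mem_univ _, s(w, x), f, rfl, (G.mem_edgeSet).mpr hadj,
        SimpleGraph.mem_edgeFinset.mp hfe, hcc⟩
    · intro hall
      exact hall s(w, x) (by simp) ⟨w, hw, by simp⟩
    · intro hall
      obtain ⟨y, hyC, hyf⟩ := hall f (by simp [Sym2.mem_iff])
      exact havoid y hyf hyC
  · rintro ⟨w, x, f⟩ hq ⟨w', x', f'⟩ hq' heq
    rw [Finset.mem_sigma] at hq hq'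
    obtain ⟨hw, hq⟩ := hq
    obtain ⟨hw', hq'⟩ := hq'
    rw [soPairs, Finset.mem_filter] at hq hq'
    obtain ⟨-, hadj, hfe, havoid, hxf, hcc⟩ := hq
    obtain ⟨-, hadj', hfe', havoid', hxf', hcc'⟩ := hq'
    have hx : x ∉ Cf := adj_not_mem htwin hw hadj
    have hx' : x' ∉ Cf := adj_not_mem htwin hw' hadj'
    simp only [Sym2.eq_iff] at heq
    rcases heq with ⟨he, rfl⟩ | ⟨he, hf⟩
    · rcases he with ⟨rfl, rfl⟩ | ⟨rfl, rfl⟩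
      · rfl
      · exact absurd hw hx'
    · exfalso
      have : w ∈ f' := by rw [← he]; simp
      exact havoid' w this hw
  · intro p hp
    rw [A1F, Finset.mem_filter] at hp
    obtain ⟨hcr, hnQ, hnR⟩ := hp
    have hcr' := hcr
    rw [crF, Finset.mem_filter] at hcr'
    obtain ⟨-, e, f, rfl, he, hf, hcc⟩ := hcr'
    by_cases hMe : Mts Cf e <;> by_cases hMf : Mts Cf f
    · exact absurd (fun e' he' => by
        rw [Sym2.mem_iff] at he'
        rcases he' with rfl | rfl <;> assumption) hnR
    · obtain ⟨w, x, hw, hx, hadj, rfl⟩ := orient_meeting htwin he hMe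
      refine ⟨⟨w, x, f⟩, ?_, rfl⟩
      rw [Finset.mem_sigma, soPairs, Finset.mem_filter]
      refine ⟨hw, Finset.mem_univ _, hadj, SimpleGraph.mem_edgeFinset.mpr hf,
        fun z hz hzC => hMf ⟨z, hzC, hz⟩, fun hxf => hcc.1 x (by simp) hxf, hcc⟩
    · obtain ⟨w, x, hw, hx, hadj, rfl⟩ := orient_meeting htwin hf hMf
      refine ⟨⟨w, x, e⟩, ?_, Sym2.eq_swap⟩
      have hcc2 := convexCross_symm hσ he hf hcc
      rw [Finset.mem_sigma, soPairs, Finset.mem_filter]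
      refine ⟨hw, Finset.mem_univ _, hadj, SimpleGraph.mem_edgeFinset.mpr he,
        fun z hz hzC => hMe ⟨z, hzC, hz⟩, fun hxe => hcc2.1 x (by simp) hxe, hcc2⟩
    · exact absurd (fun e' he' hM => by
        rw [Sym2.mem_iff] at he'
        rcases he' with rfl | rfl <;> exact absurd hM (by assumption)) hnQ

end twin2

section twin3
variable {u : V} (htwin : ∀ w ∈ Cf, ∀ x, G.Adj w x ↔ G.Adj u x)

include htwin in
lemma soPairs_transfer (hσ : Function.Injective σ) (hσ' : Function.Injective σ')
    (hu : u ∈ Cf) (hanch : σ u = 0) (m' : ℕ)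
    (hlow : ∀ w ∈ Cf, (σ' w).val < m') (hhigh : ∀ d, d ∉ Cf → m' ≤ (σ' d).val)
    (hord : ∀ d₁ d₂ : V, d₁ ∉ Cf → d₂ ∉ Cf →
      ((σ d₁).val < (σ d₂).val ↔ (σ' d₁).val < (σ' d₂).val))
    {w : V} (hw : w ∈ Cf) : soPairs G Cf σ' w = soPairs G Cf σ u := by
  classical
  have anchlt : ∀ y : V, y ∉ Cf → (σ u).val < (σ y).val := by
    intro y hy
    have hne : σ y ≠ 0 := fun h => hy (by rwa [← hσ (h.trans hanch.symm)] at hu)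
    have : 0 < (σ y).val := Nat.pos_of_ne_zero (fun h => hne ((ZMod.val_eq_zero _).mp h))
    rw [hanch, ZMod.val_zero]
    exact this
  have lowhigh : ∀ (w' y : V), w' ∈ Cf → y ∉ Cf → (σ' w').val < (σ' y).val :=
    fun w' y hw' hy => lt_of_lt_of_le (hlow w' hw') (hhigh y hy)
  ext ⟨x, f⟩
  induction f using Sym2.inductionOn with | hf c d =>
  rw [soPairs, soPairs, Finset.mem_filter, Finset.mem_filter]
  simp only [Finset.mem_univ, true_and]
  have hadj_iff : G.Adj w x ↔ G.Adj u x := htwin w hw x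
  constructor
  · rintro ⟨hadj, hfe, havoid, hxf, hcc⟩
    have hadju : G.Adj u x := hadj_iff.mp hadj
    have hx : x ∉ Cf := adj_not_mem htwin hw hadj
    have hcd : G.Adj c d := SimpleGraph.mem_edgeFinset.mp hfe
    have hc : c ∉ Cf := havoid c (by simp)
    have hd : d ∉ Cf := havoid d (by simp [Sym2.mem_iff])
    have hxc : x ≠ c := fun h => hxf (by simp [h])
    have hxd : x ≠ d := fun h => hxf (by simp [Sym2.mem_iff, h])
    have hwc : w ≠ c := fun h => hc (h ▸ hw)
    have hwd : w ≠ d := fun h => hd (h ▸ hw)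
    have huc : u ≠ c := fun h => hc (h ▸ hu)
    have hud : u ≠ d := fun h => hd (h ▸ hu)
    refine ⟨hadju, hfe, havoid, hxf, ?_⟩
    rw [convexCross_char hσ' hadj.ne hwc hwd hxc hxd hcd.ne] at hcc
    rw [convexCross_char hσ hadju.ne huc hud hxc hxd hcd.ne]
    rw [crossPts_congr (hσ.ne hadju.ne) (hσ.ne huc) (hσ.ne hud) (hσ.ne hxc) (hσ.ne hxd)
      (hσ.ne hcd.ne) (hσ'.ne hadj.ne) (hσ'.ne hwc) (hσ'.ne hwd) (hσ'.ne hxc) (hσ'.ne hxd)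
      (hσ'.ne hcd.ne)
      (iff_of_true (anchlt x hx) (lowhigh w x hw hx))
      (iff_of_true (anchlt c hc) (lowhigh w c hw hc))
      (iff_of_true (anchlt d hd) (lowhigh w d hw hd))
      (hord x c hx hc) (hord x d hx hd) (hord c d hc hd)]
    exact hcc
  · rintro ⟨hadju, hfe, havoid, hxf, hcc⟩
    have hadj : G.Adj w x := hadj_iff.mpr hadju
    have hx : x ∉ Cf := adj_not_mem htwin hw hadj
    have hcd : G.Adj c d := SimpleGraph.mem_edgeFinset.mp hfe
    have hc : c ∉ Cf := havoid c (by simp)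
    have hd : d ∉ Cf := havoid d (by simp [Sym2.mem_iff])
    have hxc : x ≠ c := fun h => hxf (by simp [h])
    have hxd : x ≠ d := fun h => hxf (by simp [Sym2.mem_iff, h])
    have hwc : w ≠ c := fun h => hc (h ▸ hw)
    have hwd : w ≠ d := fun h => hd (h ▸ hw)
    have huc : u ≠ c := fun h => hc (h ▸ hu)
    have hud : u ≠ d := fun h => hd (h ▸ hu)
    refine ⟨hadj, hfe, havoid, hxf, ?_⟩
    rw [convexCross_char hσ hadju.ne huc hud hxc hxd hcd.ne] at hcc
    rw [convexCross_char hσ' hadj.ne hwc hwd hxc hxd hcd.ne]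
    rw [← crossPts_congr (hσ.ne hadju.ne) (hσ.ne huc) (hσ.ne hud) (hσ.ne hxc) (hσ.ne hxd)
      (hσ.ne hcd.ne) (hσ'.ne hadj.ne) (hσ'.ne hwc) (hσ'.ne hwd) (hσ'.ne hxc) (hσ'.ne hxd)
      (hσ'.ne hcd.ne)
      (iff_of_true (anchlt x hx) (lowhigh w x hw hx))
      (iff_of_true (anchlt c hc) (lowhigh w c hw hc))
      (iff_of_true (anchlt d hd) (lowhigh w d hw hd))
      (hord x c hx hc) (hord x d hx hd) (hord c d hc hd)]
    exact hcc

end twin3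

section twin4
variable {u : V} (htwin : ∀ w ∈ Cf, ∀ x, G.Adj w x ↔ G.Adj u x)

include htwin in
lemma QdF_card (hσ : Function.Injective σ) :
    (QdF G Cf σ).card = 2 * (A2F G Cf σ).card := by
  classical
  have hmaps : ∀ q ∈ QdF G Cf σ,
      s(s((q : (V × V) × (V × V)).1.1, q.1.2), s(q.2.1, q.2.2)) ∈ A2F G Cf σ := by
    rintro ⟨⟨w, x⟩, w', y⟩ hq
    rw [QdF, Finset.mem_filter] at hq
    obtain ⟨-, hw, hw', hadj, hadj', hne, hne2, hcc⟩ := hq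
    rw [A2F, Finset.mem_filter]
    constructor
    · rw [crF, Finset.mem_filter]
      exact ⟨Finset.mem_univ _, s(w, x), s(w', y), rfl, (G.mem_edgeSet).mpr hadj,
        (G.mem_edgeSet).mpr hadj', hcc⟩
    · intro e he
      rw [Sym2.mem_iff] at he
      rcases he with rfl | rfl
      · exact ⟨w, hw, by simp⟩
      · exact ⟨w', hw', by simp⟩
  rw [Finset.card_eq_sum_card_fiberwise hmaps]
  have hfib2 : ∀ p ∈ A2F G Cf σ,
      ((QdF G Cf σ).filter
        (fun q => s(s(q.1.1, q.1.2), s(q.2.1, q.2.2)) = p)).card = 2 := by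
    intro p hp
    rw [A2F, Finset.mem_filter] at hp
    obtain ⟨hcr, hall⟩ := hp
    rw [crF, Finset.mem_filter] at hcr
    obtain ⟨-, e, f, rfl, he, hf, hcc⟩ := hcr
    obtain ⟨w, x, hw, hx, hadj, rfl⟩ := orient_meeting htwin he (hall e (by simp))
    obtain ⟨w', y, hw', hy, hadj', rfl⟩ :=
      orient_meeting htwin hf (hall f (by simp [Sym2.mem_iff]))
    have hww' : w ≠ w' := fun h => hcc.1 w (by simp) (by simp [h])
    have hxy : x ≠ y := fun h => hcc.1 x (by simp) (by simp [Sym2.mem_iff, h])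
    have hccs : ConvexCross σ s(w', y) s(w, x) := convexCross_symm hσ he hf hcc
    have hfib : (QdF G Cf σ).filter
        (fun q => s(s(q.1.1, q.1.2), s(q.2.1, q.2.2)) = s(s(w, x), s(w', y))) =
        {((w, x), (w', y)), ((w', y), (w, x))} := by
      ext ⟨⟨a, b⟩, c, d⟩
      rw [Finset.mem_filter, QdF, Finset.mem_filter]
      simp only [Finset.mem_insert, Finset.mem_singleton, Finset.mem_univ, true_and]
      constructor
      · rintro ⟨⟨ha, hc, hadja, hadjc, hac, hbd, hcca⟩, heq⟩
        rw [Sym2.eq_iff] at heq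
        rcases heq with ⟨h1, h2⟩ | ⟨h1, h2⟩
        · rw [Sym2.eq_iff] at h1 h2
          rcases h1 with ⟨rfl, rfl⟩ | ⟨rfl, rfl⟩
          · rcases h2 with ⟨rfl, rfl⟩ | ⟨rfl, rfl⟩
            · exact Or.inl rfl
            · exact absurd hc hy
          · exact absurd ha hx
        · rw [Sym2.eq_iff] at h1 h2
          rcases h1 with ⟨rfl, rfl⟩ | ⟨rfl, rfl⟩
          · rcases h2 with ⟨rfl, rfl⟩ | ⟨rfl, rfl⟩
            · exact Or.inr rfl
            · exact absurd hc hx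
          · exact absurd ha hy
      · rintro (heq | heq) <;>
          (simp only [Prod.mk.injEq] at heq; obtain ⟨⟨rfl, rfl⟩, rfl, rfl⟩ := heq)
        · exact ⟨⟨hw, hw', hadj, hadj', hww', hxy, hcc⟩, rfl⟩
        · exact ⟨⟨hw', hw, hadj', hadj, hww'.symm, hxy.symm, hccs⟩, Sym2.eq_swap⟩
    rw [hfib]
    rw [Finset.card_insert_of_notMem, Finset.card_singleton]
    simp only [Finset.mem_singleton, Prod.mk.injEq, not_and]
    intro h
    exact absurd h.1 hww'
  rw [Finset.sum_congr rfl hfib2, Finset.sum_const, smul_eq_mul, mul_comm]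

include htwin in
lemma QdF_swap_not_mem (hσ : Function.Injective σ) {q : (V × V) × (V × V)}
    (hq : q ∈ QdF G Cf σ) : ((q.1.1, q.2.2), (q.2.1, q.1.2)) ∉ QdF G Cf σ := by
  classical
  obtain ⟨⟨a, b⟩, c, d⟩ := q
  rw [QdF, Finset.mem_filter] at hq
  obtain ⟨-, ha, hc, hadj, hadj', hac, hbd, hcc⟩ := hq
  intro hq2
  rw [QdF, Finset.mem_filter] at hq2
  obtain ⟨-, -, -, hadjad, hadjcb, -, -, hcc2⟩ := hq2
  dsimp only at ha hc hadj hadj' hac hbd hcc hadjad hadjcb hcc2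
  have hb : b ∉ Cf := adj_not_mem htwin ha hadj
  have hd : d ∉ Cf := adj_not_mem htwin hc hadj'
  have hab : a ≠ b := hadj.ne
  have had : a ≠ d := fun h => hd (by rw [← h]; exact ha)
  have hbc : b ≠ c := fun h => hb (by rw [h]; exact hc)
  have hcd : c ≠ d := hadj'.ne
  rw [convexCross_char hσ hab hac had hbc hbd hcd] at hcc
  rw [convexCross_char hσ had hac hab hcd.symm (Ne.symm hbd) hbc.symm] at hcc2
  exact crossPts_not_both (hσ.ne hab) (hσ.ne hac) (hσ.ne had) (hσ.ne hbc) (hσ.ne hbd)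
    (hσ.ne hcd) ⟨hcc, hcc2⟩

include htwin in
lemma QdF_le (hσ : Function.Injective σ) (hσ' : Function.Injective σ') (m' : ℕ)
    (hlow : ∀ w ∈ Cf, (σ' w).val < m') (hhigh : ∀ d, d ∉ Cf → m' ≤ (σ' d).val) :
    (QdF G Cf σ).card ≤ (QdF G Cf σ').card := by
  classical
  set F : (V × V) × (V × V) → (V × V) × (V × V) := fun q =>
    if ConvexCross σ' s(q.1.1, q.1.2) s(q.2.1, q.2.2) then q
    else ((q.1.1, q.2.2), (q.2.1, q.1.2)) with hF
  apply Finset.card_le_card_of_injOn F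
  · rintro ⟨⟨w, x⟩, w', y⟩ hq
    rw [Finset.mem_coe, QdF, Finset.mem_filter] at hq
    obtain ⟨-, hw, hw', hadj, hadj', hne, hne2, hcc⟩ := hq
    dsimp only at hw hw' hadj hadj' hne hne2 hcc
    have hx : x ∉ Cf := adj_not_mem htwin hw hadj
    have hy : y ∉ Cf := adj_not_mem htwin hw' hadj'
    have hwy : w ≠ y := fun h => hy (by rw [← h]; exact hw)
    have hw'x : w' ≠ x := fun h => hx (by rw [← h]; exact hw')
    have hyw' : y ≠ w' := fun h => hy (by rw [h]; exact hw')
    by_cases hC : ConvexCross σ' s(w, x) s(w', y)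
    · rw [Finset.mem_coe, QdF, Finset.mem_filter]
      simp only [hF, if_pos hC]
      exact ⟨Finset.mem_univ _, hw, hw', hadj, hadj', hne, hne2, hC⟩
    · have hadjwy : G.Adj w y := (htwin w hw y).mpr ((htwin w' hw' y).mp hadj')
      have hadjw'x : G.Adj w' x := (htwin w' hw' x).mpr ((htwin w hw x).mp hadj)
      have halt := crossPts_at_least_one (a := σ' w) (b := σ' x) (c := σ' w') (d := σ' y)
        (hσ'.ne hadj.ne) (hσ'.ne hne) (hσ'.ne hwy) (hσ'.ne hw'x.symm) (hσ'.ne hne2)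
        (hσ'.ne hadj'.ne) (hlow w hw) (hlow w' hw') (hhigh x hx) (hhigh y hy)
      rcases halt with h1 | h2
      · exact absurd ((convexCross_char hσ' hadj.ne hne hwy hw'x.symm hne2 hadj'.ne).mpr h1) hC
      · rw [Finset.mem_coe, QdF, Finset.mem_filter]
        simp only [hF, if_neg hC]
        refine ⟨Finset.mem_univ _, hw, hw', hadjwy, hadjw'x, hne, hne2.symm, ?_⟩
        exact (convexCross_char hσ' hadjwy.ne hne hadj.ne hyw' hne2.symm hw'x).mpr h2
  · intro q1 hq1 q2 hq2 heq
    simp only [Finset.mem_coe] at hq1 hq2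
    simp only [hF] at heq
    by_cases c1 : ConvexCross σ' s(q1.1.1, q1.1.2) s(q1.2.1, q1.2.2) <;>
      by_cases c2 : ConvexCross σ' s(q2.1.1, q2.1.2) s(q2.2.1, q2.2.2)
    · rwa [if_pos c1, if_pos c2] at heq
    · rw [if_pos c1, if_neg c2] at heq
      rw [heq] at hq1
      exact absurd hq1 (QdF_swap_not_mem htwin hσ hq2)
    · rw [if_neg c1, if_pos c2] at heq
      rw [← heq] at hq2
      exact absurd hq2 (QdF_swap_not_mem htwin hσ hq1)
    · rw [if_neg c1, if_neg c2] at heq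
      obtain ⟨⟨a, b⟩, c, d⟩ := q1
      obtain ⟨⟨a', b'⟩, c', d'⟩ := q2
      simp only [Prod.mk.injEq] at heq
      obtain ⟨⟨h1, h2⟩, h3, h4⟩ := heq
      simp [h1, h2, h3, h4]
end twin4

section keymain
variable {u : V} (htwin : ∀ w ∈ Cf, ∀ x, G.Adj w x ↔ G.Adj u x)

include htwin in
/-- the key inequality: blocking the twin class does not decrease the crossing count -/
lemma key_ineq (hσ : Function.Injective σ) (hσ' : Function.Injective σ')
    (hu : u ∈ Cf) (hanch : σ u = 0)
    (hmax : ∀ w ∈ Cf, (soPairs G Cf σ w).card ≤ (soPairs G Cf σ u).card)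
    (m' : ℕ) (hlow : ∀ w ∈ Cf, (σ' w).val < m') (hhigh : ∀ d, d ∉ Cf → m' ≤ (σ' d).val)
    (hord : ∀ d₁ d₂ : V, d₁ ∉ Cf → d₂ ∉ Cf →
      ((σ d₁).val < (σ d₂).val ↔ (σ' d₁).val < (σ' d₂).val)) :
    (crF G σ).card ≤ (crF G σ').card := by
  rw [crF_card_partition (Cf := Cf) hσ, crF_card_partition (Cf := Cf) hσ']
  have h0 : A0F G Cf σ = A0F G Cf σ' := A0F_eq hσ hσ' hord
  have h1 : (A1F G Cf σ).card ≤ (A1F G Cf σ').card := by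
    rw [A1F_card htwin hσ, A1F_card htwin hσ']
    apply Finset.sum_le_sum
    intro w hw
    rw [soPairs_transfer htwin hσ hσ' hu hanch m' hlow hhigh hord hw]
    exact hmax w hw
  have h2 : (A2F G Cf σ).card ≤ (A2F G Cf σ').card := by
    have q1 := QdF_card (σ := σ) htwin hσ
    have q2 := QdF_card (σ := σ') htwin hσ'
    have q3 := QdF_le htwin hσ hσ' m' hlow hhigh
    omega
  rw [h0]
  omega

end keymain

end key


open Finset in
lemma step_lemma {V : Type*} [Fintype V] (G : SimpleGraph V) {n : ℕ} [NeZero n]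
    (hcard : Fintype.card V = n)
    (σ : V → ZMod n) (hσ : Function.Injective σ) (v : V) :
    ∃ σ' : V → ZMod n, Function.Injective σ' ∧
      convexCr G σ ≤ convexCr G σ' ∧
      IsCyclicInterval (σ' '' {u : V | G.neighborSet u = G.neighborSet v}) ∧
      ∀ w : V, IsCyclicInterval (σ '' {u : V | G.neighborSet u = G.neighborSet w}) →
        IsCyclicInterval (σ' '' {u : V | G.neighborSet u = G.neighborSet w}) := by
  classical
  -- the twin class of v
  set Cf : Finset V := univ.filter (fun w => G.neighborSet w = G.neighborSet v) with hCf
  have hmemCf : ∀ w, w ∈ Cf ↔ G.neighborSet w = G.neighborSet v := by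
    intro w; rw [hCf, mem_filter]; simp
  have hv : v ∈ Cf := (hmemCf v).mpr rfl
  have htwinv : ∀ w ∈ Cf, ∀ x, G.Adj w x ↔ G.Adj v x := by
    intro w hw x
    rw [← SimpleGraph.mem_neighborSet, ← SimpleGraph.mem_neighborSet, (hmemCf w).mp hw]
  -- the maximizing twin
  obtain ⟨u, hu, hmaxu⟩ := Finset.exists_max_image Cf (fun w => (soPairs G Cf σ w).card) ⟨v, hv⟩
  have htwin : ∀ w ∈ Cf, ∀ x, G.Adj w x ↔ G.Adj u x := by
    intro w hw x
    rw [htwinv w hw x, ← htwinv u hu x]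
  -- rotated original drawing
  set ρ : V → ZMod n := fun w => σ w - σ u with hρ
  have hρinj : Function.Injective ρ := by
    intro a b h
    rw [hρ] at h
    exact hσ (by simpa [sub_left_inj] using h)
  have hρbij : Function.Bijective ρ := by
    rw [Fintype.bijective_iff_injective_and_card]
    exact ⟨hρinj, by rw [ZMod.card, hcard]⟩
  have hanch : ρ u = 0 := by rw [hρ]; simp
  -- the complement and sizes
  set Df : Finset V := univ \ Cf with hDf
  set m : ℕ := Cf.card with hm
  set k : ℕ := Df.card with hk
  have hmemDf : ∀ w, w ∈ Df ↔ w ∉ Cf := by intro w; rw [hDf, mem_sdiff]; simp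
  have hmk : m + k = n := by
    have h1 : Df.card = Fintype.card V - Cf.card := by
      rw [hDf, card_sdiff_of_subset (subset_univ _), card_univ]
    have h2 : Cf.card ≤ Fintype.card V := card_le_univ Cf
    omega
  have hmn : m ≤ n := by omega
  -- index within the block of non-class vertices
  set idx : V → ℕ := fun w => (Df.filter (fun d => (ρ d).val < (ρ w).val)).card with hidx
  have idx_lt : ∀ d, d ∉ Cf → idx d < k := by
    intro d hd
    have hdD : d ∈ Df := (hmemDf d).mpr hd
    have hsub : Df.filter (fun d' => (ρ d').val < (ρ d).val) ⊆ Df.erase d := by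
      intro x hx
      rw [mem_filter] at hx
      rw [mem_erase]
      exact ⟨fun h => by simp [h] at hx, hx.1⟩
    have h1 := card_le_card hsub
    have h2 : (Df.erase d).card = k - 1 := by rw [card_erase_of_mem hdD]
    have h3 : 0 < k := card_pos.mpr ⟨d, hdD⟩
    have h4 : idx d = (Df.filter (fun d' => (ρ d').val < (ρ d).val)).card := rfl
    omega
  have idx_mono : ∀ d₁ d₂, d₁ ∈ Df → (ρ d₁).val < (ρ d₂).val → idx d₁ < idx d₂ := by
    intro d₁ d₂ hd₁ hlt
    apply card_lt_card
    have hsub : Df.filter (fun d => (ρ d).val < (ρ d₁).val) ⊆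
        Df.filter (fun d => (ρ d).val < (ρ d₂).val) := by
      intro x hx
      rw [mem_filter] at hx ⊢
      exact ⟨hx.1, hx.2.trans hlt⟩
    rw [Finset.ssubset_iff_of_subset hsub]
    refine ⟨d₁, mem_filter.mpr ⟨hd₁, hlt⟩, ?_⟩
    rw [mem_filter]
    rintro ⟨-, h⟩
    exact absurd h (lt_irrefl _)
  have idx_iff : ∀ d₁ d₂, d₁ ∈ Df → d₂ ∈ Df →
      (idx d₁ < idx d₂ ↔ (ρ d₁).val < (ρ d₂).val) := by
    intro d₁ d₂ hd₁ hd₂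
    constructor
    · intro h
      rcases lt_trichotomy ((ρ d₁).val) ((ρ d₂).val) with h' | h' | h'
      · exact h'
      · exact absurd (hρinj (ZMod.val_injective n h')) (by rintro rfl; exact absurd h (lt_irrefl _))
      · exact absurd (idx_mono d₂ d₁ hd₂ h') (by omega)
    · exact idx_mono d₁ d₂ hd₁
  -- the new drawing
  set eqC : {x // x ∈ Cf} ≃ Fin m := Cf.equivFin with heqC
  set σ' : V → ZMod n := fun w =>
    if h : w ∈ Cf then (((eqC ⟨w, h⟩ : Fin m) : ℕ) : ZMod n)
    else ((m + idx w : ℕ) : ZMod n) with hσ'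
  have hvC : ∀ w (h : w ∈ Cf), (σ' w).val = (eqC ⟨w, h⟩ : ℕ) := by
    intro w h
    simp only [hσ']
    rw [dif_pos h, ZMod.val_cast_of_lt (lt_of_lt_of_le (eqC ⟨w, h⟩).isLt hmn)]
  have hvD : ∀ w, w ∉ Cf → (σ' w).val = m + idx w := by
    intro w h
    simp only [hσ']
    rw [dif_neg h, ZMod.val_cast_of_lt (by have := idx_lt w h; omega)]
  have hlow : ∀ w ∈ Cf, (σ' w).val < m := by
    intro w h
    rw [hvC w h]
    exact (eqC ⟨w, h⟩).isLt
  have hhigh : ∀ d, d ∉ Cf → m ≤ (σ' d).val := by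
    intro d h
    rw [hvD d h]
    omega
  have hord : ∀ d₁ d₂ : V, d₁ ∉ Cf → d₂ ∉ Cf →
      ((ρ d₁).val < (ρ d₂).val ↔ (σ' d₁).val < (σ' d₂).val) := by
    intro d₁ d₂ h₁ h₂
    rw [hvD d₁ h₁, hvD d₂ h₂, ← idx_iff d₁ d₂ ((hmemDf d₁).mpr h₁) ((hmemDf d₂).mpr h₂)]
    omega
  have hσ'inj : Function.Injective σ' := by
    intro a b hab
    have hval : (σ' a).val = (σ' b).val := by rw [hab]
    by_cases ha : a ∈ Cf <;> by_cases hb : b ∈ Cf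
    · rw [hvC a ha, hvC b hb] at hval
      have : eqC ⟨a, ha⟩ = eqC ⟨b, hb⟩ := Fin.ext hval
      have := eqC.injective this
      exact congrArg Subtype.val this
    · rw [hvC a ha, hvD b hb] at hval
      have := (eqC ⟨a, ha⟩).isLt
      omega
    · rw [hvD a ha, hvC b hb] at hval
      have := (eqC ⟨b, hb⟩).isLt
      omega
    · rw [hvD a ha, hvD b hb] at hval
      have heq : idx a = idx b := by omega
      have : (ρ a).val = (ρ b).val := by
        rcases lt_trichotomy ((ρ a).val) ((ρ b).val) with h' | h' | h'
        · have := idx_mono a b ((hmemDf a).mpr ha) h'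
          omega
        · exact h'
        · have := idx_mono b a ((hmemDf b).mpr hb) h'
          omega
      exact hρinj (ZMod.val_injective n this)
  -- the crossing-number inequality
  have hcr : convexCr G σ ≤ convexCr G σ' := by
    rw [convexCr_eq, convexCr_eq]
    have htr : crF G ρ = crF G σ := crF_translate (σ := σ) (σ u)
    rw [← htr]
    apply key_ineq htwin hρinj hσ'inj hu hanch ?_ m hlow hhigh hord
    intro w hw
    have h1 : soPairs G Cf ρ w = soPairs G Cf σ w := soPairs_translate (σ := σ) (σ u) w
    have h2 : soPairs G Cf ρ u = soPairs G Cf σ u := soPairs_translate (σ := σ) (σ u) u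
    rw [h1, h2]
    exact hmaxu w hw
  -- interval facts
  have hσ'C : ∀ x (h : x ∈ Cf), σ' x = (((eqC ⟨x, h⟩ : Fin m) : ℕ) : ZMod n) := by
    intro x h
    simp only [hσ']
    rw [dif_pos h]
  have hσ'D : ∀ x, x ∉ Cf → σ' x = ((m + idx x : ℕ) : ZMod n) := by
    intro x h
    simp only [hσ']
    rw [dif_neg h]
  have hm1 : 1 ≤ m := card_pos.mpr ⟨v, hv⟩
  have hIv : IsCyclicInterval (σ' '' {u : V | G.neighborSet u = G.neighborSet v}) := by
    refine ⟨0, m - 1, ?_⟩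
    ext z
    simp only [Set.mem_image, Set.mem_setOf_eq]
    constructor
    · rintro ⟨x, hxS, rfl⟩
      have hx : x ∈ Cf := (hmemCf x).mpr hxS
      refine ⟨(eqC ⟨x, hx⟩ : ℕ), by have := (eqC ⟨x, hx⟩).isLt; omega, ?_⟩
      rw [hσ'C x hx, zero_add]
    · rintro ⟨j, hj, rfl⟩
      have hjm : j < m := by omega
      set t := eqC.symm ⟨j, hjm⟩ with ht
      refine ⟨t.1, (hmemCf t.1).mp t.2, ?_⟩
      rw [hσ'C t.1 t.2]
      have : (⟨t.1, t.2⟩ : {x // x ∈ Cf}) = t := rfl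
      rw [this, ht, Equiv.apply_symm_apply, zero_add]
  refine ⟨σ', hσ'inj, hcr, hIv, ?_⟩
  intro w hIw
  by_cases hwv : G.neighborSet w = G.neighborSet v
  · have hSeq : {u_1 : V | G.neighborSet u_1 = G.neighborSet w} =
        {u_1 : V | G.neighborSet u_1 = G.neighborSet v} := by
      ext x
      simp only [Set.mem_setOf_eq, hwv]
    rw [hSeq]
    exact hIv
  · set Sw : Set V := {u_1 : V | G.neighborSet u_1 = G.neighborSet w} with hSw
    have hSD : ∀ x ∈ Sw, x ∉ Cf := by
      intro x hx hxC
      exact hwv (((hx : G.neighborSet x = _).symm).trans ((hmemCf x).mp hxC))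
    obtain ⟨a, k₀, hSet⟩ := hIw
    set a' : ZMod n := a - σ u with ha'
    have hρSet : ρ '' Sw = {z : ZMod n | ∃ j : ℕ, j ≤ k₀ ∧ z = a' + (j : ZMod n)} := by
      ext z
      simp only [Set.mem_image, Set.mem_setOf_eq]
      constructor
      · rintro ⟨x, hx, rfl⟩
        have : σ x ∈ σ '' Sw := ⟨x, hx, rfl⟩
        rw [hSet] at this
        obtain ⟨j, hj, hje⟩ := this
        refine ⟨j, hj, ?_⟩
        rw [hρ]
        simp only
        rw [hje, ha']
        ring
      · rintro ⟨j, hj, rfl⟩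
        have : a + (j : ZMod n) ∈ σ '' Sw := by
          rw [hSet]
          exact ⟨j, hj, rfl⟩
        obtain ⟨x, hx, hxe⟩ := this
        refine ⟨x, hx, ?_⟩
        rw [hρ]
        simp only
        rw [hxe, ha']
        ring
    have hwS : w ∈ Sw := by rw [hSw]; simp
    have h0 : (0 : ZMod n) ∉ ρ '' Sw := by
      rintro ⟨x, hx, hx0⟩
      have hxu : σ x = σ u := sub_eq_zero.mp hx0
      have : x = u := hσ hxu
      subst this
      exact hSD x hx hu
    have ha'0 : a' ≠ 0 := by
      intro h
      apply h0
      rw [hρSet]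
      exact ⟨0, Nat.zero_le _, by simp [h]⟩
    have ha'pos : 0 < a'.val := ZMod.val_pos.mpr ha'0
    have hbound : a'.val + k₀ < n := by
      by_contra hcon
      push_neg at hcon
      have hjk : n - a'.val ≤ k₀ := by
        have := a'.val_lt
        omega
      apply h0
      rw [hρSet]
      refine ⟨n - a'.val, hjk, ?_⟩
      have : a' + ((n - a'.val : ℕ) : ZMod n) = ((a'.val + (n - a'.val) : ℕ) : ZMod n) := by
        push_cast
        rw [ZMod.natCast_rightInverse a']
      rw [this]
      have hsum : a'.val + (n - a'.val) = n := by
        have := a'.val_lt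
        omega
      rw [hsum, ZMod.natCast_self]
    have hval : ∀ j : ℕ, j ≤ k₀ → (a' + (j : ZMod n)).val = a'.val + j := by
      intro j hj
      have : a' + ((j : ℕ) : ZMod n) = ((a'.val + j : ℕ) : ZMod n) := by
        push_cast
        rw [ZMod.natCast_rightInverse a']
      rw [this, ZMod.val_cast_of_lt (by omega)]
    have hSchar : ∀ x, x ∈ Sw ↔ (a'.val ≤ (ρ x).val ∧ (ρ x).val ≤ a'.val + k₀) := by
      intro x
      constructor
      · intro hx
        have : ρ x ∈ ρ '' Sw := ⟨x, hx, rfl⟩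
        rw [hρSet] at this
        obtain ⟨j, hj, hje⟩ := this
        rw [hje, hval j hj]
        omega
      · rintro ⟨h1, h2⟩
        set j := (ρ x).val - a'.val with hj
        have hjk : j ≤ k₀ := by omega
        have : ρ x = a' + (j : ZMod n) := by
          apply ZMod.val_injective
          rw [hval j hjk]
          omega
        have hmem : ρ x ∈ ρ '' Sw := by
          rw [hρSet]
          exact ⟨j, hjk, this⟩
        obtain ⟨x', hx', hxe⟩ := hmem
        rwa [← hρinj hxe]
    have hsurj : ∀ c : ℕ, a'.val ≤ c → c ≤ a'.val + k₀ → ∃ y ∈ Sw, (ρ y).val = c := by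
      intro c hc1 hc2
      obtain ⟨y, hy⟩ := hρbij.2 ((c : ℕ) : ZMod n)
      have hyval : (ρ y).val = c := by rw [hy, ZMod.val_cast_of_lt (by omega)]
      refine ⟨y, ?_, hyval⟩
      rw [hSchar y, hyval]
      omega
    obtain ⟨x₀, hx₀S, hx₀val⟩ := hsurj a'.val le_rfl (by omega)
    have hidxeq : ∀ x, x ∈ Sw → idx x = idx x₀ + ((ρ x).val - a'.val) := by
      intro x hx
      obtain ⟨hb1, hb2⟩ := (hSchar x).mp hx
      have hsplit : Df.filter (fun d => (ρ d).val < (ρ x).val) =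
          (Df.filter (fun d => (ρ d).val < a'.val)) ∪
          (Df.filter (fun d => a'.val ≤ (ρ d).val ∧ (ρ d).val < (ρ x).val)) := by
        ext d
        simp only [mem_filter, mem_union]
        constructor
        · rintro ⟨hd, hdv⟩
          by_cases hc : (ρ d).val < a'.val
          · exact Or.inl ⟨hd, hc⟩
          · exact Or.inr ⟨hd, by omega, hdv⟩
        · rintro (⟨hd, hdv⟩ | ⟨hd, hdv1, hdv2⟩)
          · exact ⟨hd, by omega⟩
          · exact ⟨hd, hdv2⟩
      have hdisj : Disjoint (Df.filter (fun d => (ρ d).val < a'.val))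
          (Df.filter (fun d => a'.val ≤ (ρ d).val ∧ (ρ d).val < (ρ x).val)) := by
        rw [Finset.disjoint_left]
        intro d hd1 hd2
        rw [mem_filter] at hd1 hd2
        omega
      have hidx0 : (Df.filter (fun d => (ρ d).val < a'.val)).card = idx x₀ := by
        show _ = (Df.filter (fun d => (ρ d).val < (ρ x₀).val)).card
        rw [hx₀val]
      have hcard2 : (Df.filter (fun d => a'.val ≤ (ρ d).val ∧ (ρ d).val < (ρ x).val)).card =
          (ρ x).val - a'.val := by
        rw [← Nat.card_Ico a'.val ((ρ x).val)]
        apply Finset.card_bij (i := fun d _ => (ρ d).val)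
        · intro d hd
          rw [mem_filter] at hd
          rw [Finset.mem_Ico]
          exact ⟨hd.2.1, hd.2.2⟩
        · intro d₁ hd₁ d₂ hd₂ he
          exact hρinj (ZMod.val_injective n he)
        · intro c hc
          rw [Finset.mem_Ico] at hc
          obtain ⟨y, hyS, hyval⟩ := hsurj c hc.1 (by omega)
          refine ⟨y, ?_, hyval⟩
          rw [mem_filter]
          exact ⟨(hmemDf y).mpr (hSD y hyS), by omega, by omega⟩
      have : idx x = (Df.filter (fun d => (ρ d).val < (ρ x).val)).card := rfl
      rw [this, hsplit, Finset.card_union_of_disjoint hdisj, hidx0, hcard2]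
    refine ⟨((m + idx x₀ : ℕ) : ZMod n), k₀, ?_⟩
    ext z
    simp only [Set.mem_image, Set.mem_setOf_eq]
    constructor
    · rintro ⟨x, hxS, rfl⟩
      set j := (ρ x).val - a'.val with hj
      refine ⟨j, by have := (hSchar x).mp hxS; omega, ?_⟩
      rw [hσ'D x (hSD x hxS), hidxeq x hxS]
      push_cast
      ring
    · rintro ⟨j, hj, rfl⟩
      obtain ⟨y, hyS, hyval⟩ := hsurj (a'.val + j) (by omega) (by omega)
      refine ⟨y, hyS, ?_⟩
      rw [hσ'D y (hSD y hyS), hidxeq y hyS, hyval, Nat.add_sub_cancel_left]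
      push_cast
      ring

open Finset in
theorem exists_max_convex_drawing_with_consecutive_twins' {V : Type*} [Fintype V]
    (G : SimpleGraph V) :
    ∃ σ : V → ZMod (Fintype.card V), Function.Injective σ ∧
      (∀ τ : V → ZMod (Fintype.card V), Function.Injective τ →
        convexCr G τ ≤ convexCr G σ) ∧
      (∀ v : V, IsCyclicInterval (σ '' {u : V | G.neighborSet u = G.neighborSet v})) := by
  classical
  cases isEmpty_or_nonempty V with
  | inl hE =>
    refine ⟨fun v => isEmptyElim v, fun a => isEmptyElim a, ?_, fun v => isEmptyElim v⟩
    intro τ hτ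
    have hz : ∀ (σ₀ : V → ZMod (Fintype.card V)), convexCr G σ₀ = 0 := by
      intro σ₀
      unfold convexCr
      have : {p : Sym2 (Sym2 V) | ∃ e f : Sym2 V,
          p = s(e, f) ∧ e ∈ G.edgeSet ∧ f ∈ G.edgeSet ∧ ConvexCross σ₀ e f} = ∅ := by
        ext p
        simp only [Set.mem_setOf_eq, Set.mem_empty_iff_false, iff_false]
        rintro ⟨e, f, -, he, -⟩
        obtain ⟨⟨x, y⟩, -⟩ := e.exists_rep
        exact isEmptyElim x
      rw [this, Set.ncard_empty]
    rw [hz τ, hz _]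
  | inr hNE =>
    haveI : NeZero (Fintype.card V) := ⟨Fintype.card_ne_zero⟩
    set n := Fintype.card V with hn
    -- an injective drawing exists
    have hinj : ∃ σ : V → ZMod n, Function.Injective σ := by
      refine ⟨fun v => (((Fintype.equivFin V v : Fin (Fintype.card V)) : ℕ) : ZMod n), ?_⟩
      intro a b h
      have ha := (Fintype.equivFin V a).isLt
      have hb := (Fintype.equivFin V b).isLt
      rw [hn] at *
      have := congrArg ZMod.val h
      rw [ZMod.val_cast_of_lt ha, ZMod.val_cast_of_lt hb] at this
      exact (Fintype.equivFin V).injective (Fin.ext this)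
    -- a maximizing drawing exists
    have hTne : (univ.filter (fun σ : V → ZMod n => Function.Injective σ)).Nonempty := by
      obtain ⟨σ, hσ⟩ := hinj
      exact ⟨σ, by rw [mem_filter]; exact ⟨mem_univ _, hσ⟩⟩
    obtain ⟨σ₀, hσ₀T, hσ₀max⟩ := Finset.exists_max_image _ (fun σ => convexCr G σ) hTne
    rw [mem_filter] at hσ₀T
    have hσ₀ : Function.Injective σ₀ := hσ₀T.2
    -- fix twin classes one by one
    have main : ∀ (N : ℕ) (σ : V → ZMod n), Function.Injective σ →
        (univ.filter (fun v : V =>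
          ¬ IsCyclicInterval (σ '' {u : V | G.neighborSet u = G.neighborSet v}))).card ≤ N →
        ∃ σ' : V → ZMod n, Function.Injective σ' ∧ convexCr G σ ≤ convexCr G σ' ∧
          ∀ v : V, IsCyclicInterval (σ' '' {u : V | G.neighborSet u = G.neighborSet v}) := by
      intro N
      induction N with
      | zero =>
        intro σ hσ hcard
        refine ⟨σ, hσ, le_refl _, ?_⟩
        intro v
        by_contra hbad
        have : v ∈ univ.filter (fun v : V =>
            ¬ IsCyclicInterval (σ '' {u : V | G.neighborSet u = G.neighborSet v})) := by
          rw [mem_filter]; exact ⟨mem_univ _, hbad⟩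
        have := card_pos.mpr ⟨v, this⟩
        omega
      | succ N ih =>
        intro σ hσ hcard
        by_cases hbad : ∃ v : V,
            ¬ IsCyclicInterval (σ '' {u : V | G.neighborSet u = G.neighborSet v})
        · obtain ⟨v, hv⟩ := hbad
          obtain ⟨σ'', hσ''inj, hσ''cr, hσ''v, hσ''pres⟩ := step_lemma G hn.symm σ hσ v
          have hsub : (univ.filter (fun w : V =>
              ¬ IsCyclicInterval (σ'' '' {u : V | G.neighborSet u = G.neighborSet w}))) ⊆
              (univ.filter (fun w : V =>
              ¬ IsCyclicInterval (σ '' {u : V | G.neighborSet u = G.neighborSet w}))).erase v := by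
            intro x hx
            rw [mem_filter] at hx
            rw [mem_erase, mem_filter]
            have hxv : x ≠ v := by
              rintro rfl
              exact hx.2 hσ''v
            refine ⟨hxv, mem_univ _, fun h => hx.2 (hσ''pres x h)⟩
          have hvmem : v ∈ (univ.filter (fun w : V =>
              ¬ IsCyclicInterval (σ '' {u : V | G.neighborSet u = G.neighborSet w}))) := by
            rw [mem_filter]; exact ⟨mem_univ _, hv⟩
          have hle := card_le_card hsub
          rw [card_erase_of_mem hvmem] at hle
          have hN : (univ.filter (fun w : V =>
              ¬ IsCyclicInterval (σ'' '' {u : V | G.neighborSet u = G.neighborSet w}))).card ≤ N := by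
            have hpos := card_pos.mpr ⟨v, hvmem⟩
            omega
          obtain ⟨σ', h1, h2, h3⟩ := ih σ'' hσ''inj hN
          exact ⟨σ', h1, hσ''cr.trans h2, h3⟩
        · push_neg at hbad
          exact ⟨σ, hσ, le_refl _, hbad⟩
    obtain ⟨σ', h1, h2, h3⟩ := main (Fintype.card V) σ₀ hσ₀ (by
      have := card_le_univ (univ.filter (fun v : V =>
        ¬ IsCyclicInterval (σ₀ '' {u : V | G.neighborSet u = G.neighborSet v})))
      omega)
    refine ⟨σ', h1, ?_, h3⟩
    intro τ hτ
    have : convexCr G τ ≤ convexCr G σ₀ := hσ₀max τ (by rw [mem_filter]; exact ⟨mem_univ _, hτ⟩)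
    exact this.trans h2


/-- Every finite simple graph has a crossing-maximal convex drawing in which each twin
class (vertices with identical neighborhoods) occupies a set of consecutive positions. -/
theorem exists_max_convex_drawing_with_consecutive_twins {V : Type*} [Fintype V]
    (G : SimpleGraph V) :
    ∃ σ : V → ZMod (Fintype.card V), Function.Injective σ ∧
      (∀ τ : V → ZMod (Fintype.card V), Function.Injective τ →
        convexCr G τ ≤ convexCr G σ) ∧
      (∀ v : V, IsCyclicInterval (σ '' {u : V | G.neighborSet u = G.neighborSet v})) := by
  exact exists_max_convex_drawing_with_consecutive_twins' G
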